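/- Let K ≥ 2 be an integer and a, b, M be nonnegative reals with a > 0, b·(K−1) < 2a, and a+b ≤ M ≤ 2a+b. Then (K−1)(2a+b)/(2a) − (K−1)·M/(2a) ≤ 2·(K/2 − K·M/(2(2a+b))). -/

import Mathlib

/-- For even-`K` order optimality, second memory regime: the achievable load
`(K−1)(2a+b)/(2a) − (K−1)M/(2a)` is at most twice the cut-set bound. -/
theorem stmt_7 (K : ℕ) (hK : 2 ≤ K) (a b M : ℝ) (ha : 0 < a) (hb : 0 ≤ b) (hM : 0 ≤ M)
    (hreg : b * ((K : ℝ) - 1) < 2 * a) (hMlb : a + b ≤ M) (hMub : M ≤ 2 * a + b) :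
    ((K : ℝ) - 1) * (2 * a + b) / (2 * a) - ((K : ℝ) - 1) * M / (2 * a) ≤
      2 * ((K : ℝ) / 2 - (K : ℝ) * M / (2 * (2 * a + b))) := by
  have hK1 : (1:ℝ) ≤ (K:ℝ) := by exact_mod_cast Nat.one_le_of_lt hK
  have hd : 0 < 2 * a + b := by linarith
  rw [div_sub_div_same, div_le_iff₀ (by linarith : (0:ℝ) < 2*a)]
  have h2 : 2 * ((K:ℝ) / 2 - K * M / (2 * (2 * a + b))) = K * (2*a+b-M) / (2*a+b) := by
    field_simp
  rw [h2, div_mul_eq_mul_div, le_div_iff₀ hd]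
  nlinarith [mul_nonneg (sub_nonneg.2 hMub) (sub_nonneg.2 hK1)]
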